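/- Let Y, Z be Banach spaces, A† : Z → Y an injective bounded linear operator, X ⊆ Y convex, closed and bounded, U ⊇ X open, f : U → Z Fréchet differentiable, and T(x) := x − A†(f(x)). Fix x̄ ∈ X and define K(X, x̄) := x̄ − A†(f(x̄)) + closedConvexHull { (I − A†∘Df(x₁))(x₂ − x̄) : x₁, x₂ ∈ X }. Then for every x ∈ X, T(x) ∈ K(X, x̄). -/

import Mathlib

/-- Krawczyk operator in Banach spaces: T(x) ∈ K(X, x̄) for every x ∈ X. -/
theorem krawczyk_T_mem
    {Y Z : Type*} [NormedAddCommGroup Y] [NormedSpace ℝ Y] [CompleteSpace Y]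
    [NormedAddCommGroup Z] [NormedSpace ℝ Z] [CompleteSpace Z]
    (A : Z →L[ℝ] Y) (hA : Function.Injective A)
    (X : Set Y) (hXconv : Convex ℝ X) (hXclosed : IsClosed X)
    (hXbdd : Bornology.IsBounded X)
    (U : Set Y) (hU : IsOpen U) (hXU : X ⊆ U)
    (f : Y → Z) (Df : Y → (Y →L[ℝ] Z))
    (hf : ∀ x ∈ U, HasFDerivAt f (Df x) x)
    (xb : Y) (hxb : xb ∈ X)
    (x : Y) (hx : x ∈ X) :
    (x - A (f x)) - (xb - A (f xb)) ∈
      closure (convexHull ℝ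
        {y : Y | ∃ x₁ ∈ X, ∃ x₂ ∈ X, y = (x₂ - xb) - A (Df x₁ (x₂ - xb))}) := by
  set S : Set Y := {y : Y | ∃ x₁ ∈ X, ∃ x₂ ∈ X, y = (x₂ - xb) - A (Df x₁ (x₂ - xb))}
  set s : Set Y := closure (convexHull ℝ S)
  -- the path γ t = xb + t • (x - xb)
  set γ : ℝ → Y := fun t => xb + t • (x - xb) with hγdef
  have hγX : ∀ t ∈ Set.Icc (0:ℝ) 1, γ t ∈ X := fun t ht =>
    hXconv.add_smul_sub_mem hxb hx ht
  set g : ℝ → Y := fun t => γ t - A (f (γ t)) with hgdef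
  set g' : ℝ → Y := fun t => (x - xb) - A (Df (γ t) (x - xb)) with hg'def
  have hγderiv : ∀ t : ℝ, HasDerivAt γ (x - xb) t := by
    intro t
    simpa [hγdef] using ((hasDerivAt_id t).smul_const (x - xb)).const_add xb
  have hgderiv : ∀ t ∈ Set.Icc (0:ℝ) 1, HasDerivAt g (g' t) t := by
    intro t ht
    have hfγ : HasDerivAt (fun u => f (γ u)) (Df (γ t) (x - xb)) t :=
      (hf (γ t) (hXU (hγX t ht))).comp_hasDerivAt t (hγderiv t)
    exact (hγderiv t).sub (A.hasFDerivAt.comp_hasDerivAt t hfγ)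
  have hg'S : ∀ t ∈ Set.Icc (0:ℝ) 1, g' t ∈ S := by
    intro t ht
    exact ⟨γ t, hγX t ht, x, hx, by simp [hg'def]⟩
  have hgs : (x - A (f x)) - (xb - A (f xb)) = g 1 - g 0 := by
    simp [hgdef, hγdef]
  rw [hgs]
  by_contra hmem
  obtain ⟨φ, c, hφ, hc⟩ := geometric_hahn_banach_closed_point
    ((convex_convexHull ℝ S).closure) isClosed_closure hmem
  -- fencing: φ (g t) ≤ φ (g 0) + c * t on [0,1]
  have key : φ (g 1) ≤ φ (g 0) + c * 1 := by
    refine image_le_of_deriv_right_le_deriv_boundary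
      (f := fun t => φ (g t)) (f' := fun t => φ (g' t))
      (B := fun t => φ (g 0) + c * t) (B' := fun _ => c)
      ?_ ?_ (by simp) ?_ ?_ ?_ (by norm_num : (1:ℝ) ∈ Set.Icc (0:ℝ) 1)
    · intro t ht
      exact (φ.hasFDerivAt.comp_hasDerivAt t (hgderiv t ht)).continuousAt.continuousWithinAt
    · intro t ht
      exact (φ.hasFDerivAt.comp_hasDerivAt t
        (hgderiv t ⟨ht.1, ht.2.le⟩)).hasDerivWithinAt
    · exact (continuous_const.add (continuous_const.mul continuous_id)).continuousOn
    · intro t _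
      simpa using ((hasDerivAt_id t).const_mul c).const_add (φ (g 0)) |>.hasDerivWithinAt
    · intro t ht
      exact le_of_lt (hφ _ (subset_closure (subset_convexHull ℝ S (hg'S t ⟨ht.1, ht.2.le⟩))))
  have : φ (g 1 - g 0) ≤ c := by
    rw [map_sub]; linarith
  linarith
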